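/- Let (X, ≤₁, ≤₂) be an FM frame (≤₂ ⊆ ≤₁ partial orders on X) with associated Alexandroff topologies of upsets. For any subset Y ⊆ X, the refined regular open closure c(Y) = I₁C₂(↑₁Y) is the smallest refined regular open set containing Y, where ↑₁Y is the ≤₁-upward closure of Y. -/

import Mathlib

/-- `I₁C₂` for the Alexandroff upset topologies of an FM frame:
`x ∈ I₁C₂ A` iff every `≤₁`-successor of `x` has a `≤₂`-successor in `A`. -/
def fmIC {X : Type*} (le1 le2 : X → X → Prop) (A : Set X) : Set X :=
  {x | ∀ y, le1 x y → ∃ z, le2 y z ∧ z ∈ A}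

/-- The `≤₁`-upward closure. -/
def fmUp1 {X : Type*} (le1 : X → X → Prop) (Y : Set X) : Set X :=
  {x | ∃ y ∈ Y, le1 y x}

/-- In an FM frame, `c(Y) = I₁C₂(↑₁Y)` is the smallest refined regular open set
containing `Y`. -/
theorem fm_refinedRegularOpenClosure {X : Type*} (le1 le2 : X → X → Prop)
    [IsPartialOrder X le1] [IsPartialOrder X le2]
    (hsub : ∀ x y, le2 x y → le1 x y) (Y : Set X) :
    fmIC le1 le2 (fmUp1 le1 Y) = fmIC le1 le2 (fmIC le1 le2 (fmUp1 le1 Y)) ∧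
    Y ⊆ fmIC le1 le2 (fmUp1 le1 Y) ∧
    (∀ Z : Set X, Z = fmIC le1 le2 Z → Y ⊆ Z → fmIC le1 le2 (fmUp1 le1 Y) ⊆ Z) := by
  have t1 : Transitive le1 := IsPartialOrder.toIsPreorder.toIsTrans.trans
  have r1 : ∀ x, le1 x x := IsPartialOrder.toIsPreorder.toRefl.refl
  have t2 : Transitive le2 := IsPartialOrder.toIsPreorder.toIsTrans.trans
  have r2 : ∀ x, le2 x x := IsPartialOrder.toIsPreorder.toRefl.refl
  -- fmIC A is ≤₁-upper
  have upper : ∀ A : Set X, ∀ x x', x ∈ fmIC le1 le2 A → le1 x x' → x' ∈ fmIC le1 le2 A := by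
    intro A x x' hx hxx' y hy
    exact hx y (t1 hxx' hy)
  have idem : ∀ A : Set X, fmIC le1 le2 A = fmIC le1 le2 (fmIC le1 le2 A) := by
    intro A
    ext x
    constructor
    · intro hx y hy
      exact ⟨y, r2 y, upper A x y hx hy⟩
    · intro hx y hy
      obtain ⟨z, hyz, hz⟩ := hx y hy
      obtain ⟨v, hzv, hv⟩ := hz z (r1 z)
      exact ⟨v, t2 hyz hzv, hv⟩
  refine ⟨idem _, ?_, ?_⟩
  · intro x hx y hy
    exact ⟨y, r2 y, x, hx, hy⟩
  · intro Z hZ hYZ x hx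
    rw [hZ]
    intro y hy
    obtain ⟨z, hyz, w, hw, hwz⟩ := hx y hy
    rw [hZ] at hYZ
    have : z ∈ fmIC le1 le2 Z := upper Z w z (hYZ hw) hwz
    obtain ⟨v, hzv, hv⟩ := this z (r1 z)
    exact ⟨v, t2 hyz hzv, hv⟩
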